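/- Let G be a finite abelian group of order q, Y a finite set, and W a channel (G, Y, W). Let d ∈ G, let d̃ be any element of the cyclic subgroup ⟨d⟩ generated by d, and let ε > 0. If Z_d(W) > 1 − ε, then Z_{d̃}(W) ≥ 1 − q³ε. -/

import Mathlib

open Finset

/-- Bhattacharyya distance between two input symbols:
`Z(W_{x,x̃}) = Σ_y √(W(y|x)·W(y|x̃))`. -/
noncomputable def Zpair {G Y : Type} [Fintype Y] (W : G → Y → ℝ) (x x' : G) : ℝ :=
  ∑ y : Y, Real.sqrt (W x y * W x' y)

/-- `Z_d(W) = (1/q)·Σ_{x∈G} Z(W_{x,x+d})`. -/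
noncomputable def Zd {G Y : Type} [Fintype G] [Fintype Y] [Add G]
    (W : G → Y → ℝ) (d : G) : ℝ :=
  (1 / (Fintype.card G : ℝ)) * ∑ x : G, Zpair W x (x + d)

lemma Zpair_le_one {G Y : Type} [Fintype Y] (W : G → Y → ℝ)
    (hW0 : ∀ x y, 0 ≤ W x y) (hW1 : ∀ x, ∑ y, W x y = 1) (x x' : G) :
    Zpair W x x' ≤ 1 := by
  have h : ∀ y : Y, Real.sqrt (W x y * W x' y) ≤ (W x y + W x' y) / 2 := by
    intro y
    rw [Real.sqrt_mul (hW0 x y)]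
    have h2 : 2 * Real.sqrt (W x y) * Real.sqrt (W x' y) ≤
        Real.sqrt (W x y) ^ 2 + Real.sqrt (W x' y) ^ 2 := two_mul_le_add_sq _ _
    rw [Real.sq_sqrt (hW0 x y), Real.sq_sqrt (hW0 x' y)] at h2
    linarith
  unfold Zpair
  calc ∑ y : Y, Real.sqrt (W x y * W x' y) ≤ ∑ y, (W x y + W x' y) / 2 :=
        Finset.sum_le_sum fun y _ => h y
    _ = 1 := by rw [← Finset.sum_div, Finset.sum_add_distrib, hW1, hW1]; norm_num

/-- if `Z_d(W) > 1 − ε` then `Z_{d̃}(W) ≥ 1 − q³ε` for every `d̃` in the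
cyclic subgroup generated by `d`. -/
theorem Zd_high_on_cyclic_subgroup
    {G Y : Type} [Fintype G] [AddCommGroup G] [Fintype Y]
    (W : G → Y → ℝ) (hW0 : ∀ x y, 0 ≤ W x y) (hW1 : ∀ x, ∑ y, W x y = 1)
    (d d' : G) (hd' : d' ∈ AddSubgroup.zmultiples d)
    (ε : ℝ) (hε : 0 < ε)
    (hZd : Zd W d > 1 - ε) :
    Zd W d' ≥ 1 - (Fintype.card G : ℝ) ^ 3 * ε := by
  classical
  set qn : ℕ := Fintype.card G with hqn
  have hq0 : 0 < qn := Fintype.card_pos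
  set q : ℝ := (qn : ℝ) with hq
  have hqpos : (0:ℝ) < q := by rw [hq]; exact_mod_cast hq0
  -- pointwise bound on the generator
  have hpt : ∀ x : G, 1 - Zpair W x (x + d) ≤ q * ε := by
    have hsum : ∑ x : G, (1 - Zpair W x (x + d)) < q * ε := by
      unfold Zd at hZd
      have hS : (1 - ε) * q < ∑ x : G, Zpair W x (x + d) := by
        have h : (1 - ε) < (∑ x : G, Zpair W x (x + d)) / q := by
          rw [div_eq_inv_mul, ← one_div, hq, hqn]; exact hZd
        exact (lt_div_iff₀ hqpos).mp h
      have : ∑ x : G, (1 - Zpair W x (x + d)) = q - ∑ x : G, Zpair W x (x + d) := by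
        rw [Finset.sum_sub_distrib, Finset.sum_const, Finset.card_univ]
        simp [hq]; exact hqn.symm
      rw [this]; nlinarith
    intro x
    have hterm : ∀ z : G, z ∈ Finset.univ → (0:ℝ) ≤ 1 - Zpair W z (z + d) := by
      intro z _
      linarith [Zpair_le_one W hW0 hW1 z (z + d)]
    have := Finset.single_le_sum hterm (Finset.mem_univ x)
    linarith
  -- Euclidean (Hellinger) embedding
  let v : G → EuclideanSpace ℝ Y := fun x => WithLp.toLp 2 (fun y => Real.sqrt (W x y))
  have hdist_sq : ∀ a b : G, dist (v a) (v b) ^ 2 = 2 - 2 * Zpair W a b := by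
    intro a b
    rw [EuclideanSpace.dist_eq, Real.sq_sqrt (Finset.sum_nonneg fun y _ => sq_nonneg _)]
    simp_rw [Real.dist_eq, sq_abs]
    have hterm : ∀ y : Y, (v a y - v b y) ^ 2
        = W a y + W b y - 2 * Real.sqrt (W a y * W b y) := by
      intro y
      have : v a y = Real.sqrt (W a y) := rfl
      have hb : v b y = Real.sqrt (W b y) := rfl
      rw [this, hb, sub_sq, Real.sq_sqrt (hW0 a y), Real.sq_sqrt (hW0 b y),
        Real.sqrt_mul (hW0 a y)]
      ring
    rw [Finset.sum_congr rfl fun y _ => hterm y]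
    unfold Zpair
    rw [Finset.sum_sub_distrib, Finset.sum_add_distrib, hW1, hW1, Finset.mul_sum]
    ring
  -- one-step distance bound
  have hstep : ∀ x : G, dist (v x) (v (x + d)) ≤ Real.sqrt (2 * (q * ε)) := by
    intro x
    have h1 : dist (v x) (v (x + d)) ^ 2 ≤ 2 * (q * ε) := by
      rw [hdist_sq]; linarith [hpt x]
    calc dist (v x) (v (x + d)) = Real.sqrt (dist (v x) (v (x + d)) ^ 2) := by
          rw [Real.sqrt_sq dist_nonneg]
      _ ≤ Real.sqrt (2 * (q * ε)) := Real.sqrt_le_sqrt h1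
  -- chained bound
  have hchain : ∀ (n : ℕ) (x : G),
      dist (v x) (v (x + n • d)) ≤ n * Real.sqrt (2 * (q * ε)) := by
    intro n
    induction n with
    | zero => intro x; simp
    | succ n ih =>
      intro x
      have htri := dist_triangle (v x) (v (x + n • d)) (v (x + (n + 1) • d))
      have heq : x + (n + 1) • d = (x + n • d) + d := by
        rw [succ_nsmul]; abel
      have h2 : dist (v (x + n • d)) (v (x + (n + 1) • d)) ≤ Real.sqrt (2 * (q * ε)) := by
        rw [heq]; exact hstep (x + n • d)
      have := ih x
      push_cast
      linarith
  -- express d' as n • d with n < qn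
  obtain ⟨k, hk⟩ := AddSubgroup.mem_zmultiples_iff.mp hd'
  set n : ℕ := (k % (qn : ℤ)).toNat with hn
  have hqz : (qn : ℤ) • d = 0 := by
    have : qn • d = 0 := by
      simpa [hqn] using card_nsmul_eq_zero (a := d)
    simpa using this
  have hnd : n • d = d' := by
    have hmod : ((k % (qn : ℤ)) : ℤ) • d = k • d := by
      conv_rhs => rw [← Int.emod_add_mul_ediv k (qn : ℤ)]
      rw [add_zsmul, mul_comm, mul_zsmul, hqz]
      simp
    have : (n : ℤ) • d = k • d := by
      rw [hn, Int.toNat_of_nonneg (Int.emod_nonneg k (by exact_mod_cast hq0.ne'))]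
      exact hmod
    rw [← hk]
    simpa using this
  have hnlt : (n : ℝ) ≤ q := by
    have : (n : ℤ) < qn := by
      rw [hn, Int.toNat_of_nonneg (Int.emod_nonneg k (by exact_mod_cast hq0.ne'))]
      exact Int.emod_lt_of_pos k (by exact_mod_cast hq0)
    have : n < qn := by exact_mod_cast this
    rw [hq]; exact_mod_cast this.le
  -- pointwise bound for d'
  have hpt' : ∀ x : G, 1 - Zpair W x (x + d') ≤ q ^ 3 * ε := by
    intro x
    have hd := hchain n x
    rw [hnd] at hd
    have hsq : dist (v x) (v (x + d')) ^ 2 ≤ (n * Real.sqrt (2 * (q * ε))) ^ 2 :=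
      pow_le_pow_left₀ dist_nonneg hd 2
    have hs : Real.sqrt (2 * (q * ε)) ^ 2 = 2 * (q * ε) :=
      Real.sq_sqrt (by positivity)
    have h2 : dist (v x) (v (x + d')) ^ 2 ≤ (n:ℝ)^2 * (2 * (q * ε)) := by
      calc dist (v x) (v (x + d')) ^ 2 ≤ (n * Real.sqrt (2 * (q * ε))) ^ 2 := hsq
        _ = (n:ℝ)^2 * (Real.sqrt (2 * (q * ε)))^2 := by ring
        _ = (n:ℝ)^2 * (2 * (q * ε)) := by rw [hs]
    rw [hdist_sq] at h2
    have hn2 : (n:ℝ)^2 ≤ q^2 := by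
      have := hnlt
      nlinarith [Nat.cast_nonneg (α := ℝ) n]
    nlinarith
  -- conclude
  unfold Zd
  rw [ge_iff_le, ← hqn, ← hq]
  have hsum : q * (1 - q ^ 3 * ε) ≤ ∑ x : G, Zpair W x (x + d') := by
    calc q * (1 - q ^ 3 * ε) = ∑ _x : G, (1 - q ^ 3 * ε) := by
          rw [Finset.sum_const, Finset.card_univ]; simp [hq]; exact Or.inl hqn
      _ ≤ ∑ x : G, Zpair W x (x + d') :=
          Finset.sum_le_sum fun x _ => by linarith [hpt' x]
  rw [one_div, inv_mul_eq_div, le_div_iff₀ hqpos]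
  nlinarith
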